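/- Let d = min(m, n) and k ≤ d. The characteristic polynomial of the deflated preconditioned matrix H^{−1/2} 𝒫 K H^{−1/2} is X^{2k} (X − 1)^{m−d} (X + 1)^{n−d} ∏_{i=k+1}^{d} (X² − (σ_i² + 1)); in particular its eigenvalues are ±√(σ_i² + 1) for i = k+1, …, d, together with 1 with multiplicity m − d, −1 with multiplicity n − d, and 0 with multiplicity 2k. -/

import Mathlib

open Matrix Polynomial
open scoped MatrixOrder

lemma my_charpoly_conj {R : Type*} [CommRing R] {ι : Type*} [Fintype ι] [DecidableEq ι]
    (O B : Matrix ι ι R) (h : O * Oᵀ = 1) :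
    (Oᵀ * B * O).charpoly = B.charpoly := by
  have h' : Oᵀ * O = 1 := mul_eq_one_comm.mp h
  have hmap : (Oᵀ.map C) * (O.map C) = 1 := by
    rw [← Matrix.map_mul, h', Matrix.map_one C C.map_zero C.map_one]
  have key : charmatrix (Oᵀ * B * O) = (Oᵀ.map C) * charmatrix B * (O.map C) := by
    unfold charmatrix
    simp only [RingHom.mapMatrix_apply, Matrix.mul_sub, Matrix.sub_mul]
    congr 1
    · rw [scalar_apply, Matrix.mul_assoc, ← Matrix.smul_eq_diagonal_mul, Matrix.mul_smul,
        hmap, Matrix.smul_one_eq_diagonal]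
    · rw [← Matrix.map_mul, ← Matrix.map_mul]
  rw [Matrix.charpoly, Matrix.charpoly, key, Matrix.det_mul, Matrix.det_mul]
  have hd : (Oᵀ.map C).det * (O.map C).det = 1 := by
    rw [← Matrix.det_mul, hmap, Matrix.det_one]
  rw [mul_right_comm, hd, one_mul]

lemma my_charmatrix_diagonal {R : Type*} [CommRing R] {ι : Type*} [Fintype ι] [DecidableEq ι]
    (v : ι → R) :
    charmatrix (diagonal v) = diagonal (fun i => (X : R[X]) - C (v i)) := by
  ext i j
  by_cases h : i = j
  · subst h; simp
  · simp [h]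

lemma my_prod_aux {F : Type*} [Field F] (m n k : ℕ) (hk : k ≤ min m n) (x : F)
    (hx : x + 1 ≠ 0) (s : ℕ → F) (hs : ∀ i, min m n ≤ i → s i = 0) :
    (∏ j ∈ Finset.range n, (if j < k then x else x + 1)) *
      ∏ i ∈ Finset.range m, (if i < k then x else (x - 1) - (s i)^2/(x+1)) =
    x ^ (2*k) * (x - 1) ^ (m - min m n) * (x + 1) ^ (n - min m n) *
      ∏ i ∈ Finset.range (min m n), (if k ≤ i then x^2 - ((s i)^2 + 1) else 1) := by
  set d := min m n with hd
  have hdm : d ≤ m := min_le_left m n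
  have hdn : d ≤ n := min_le_right m n
  rw [← Finset.prod_range_mul_prod_Ico (fun j => if j < k then x else x + 1) hdn,
    ← Finset.prod_range_mul_prod_Ico (fun i => if i < k then x else (x - 1) - (s i)^2/(x+1)) hdm]
  have h1 : ∏ j ∈ Finset.Ico d n, (if j < k then x else x + 1) = (x+1)^(n-d) := by
    rw [Finset.prod_congr rfl (g := fun _ => x+1) ?_, Finset.prod_const, Nat.card_Ico]
    intro j hj; rw [Finset.mem_Ico] at hj
    rw [if_neg (by omega)]
  have h2 : ∏ i ∈ Finset.Ico d m, (if i < k then x else (x-1) - (s i)^2/(x+1)) = (x-1)^(m-d) := by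
    rw [Finset.prod_congr rfl (g := fun _ => x-1) ?_, Finset.prod_const, Nat.card_Ico]
    intro i hi; rw [Finset.mem_Ico] at hi
    rw [if_neg (by omega), hs i hi.1]
    norm_num
  rw [h1, h2]
  have h3 : (∏ j ∈ Finset.range d, (if j < k then x else x + 1)) *
      ∏ i ∈ Finset.range d, (if i < k then x else (x-1) - (s i)^2/(x+1)) =
      x^(2*k) * ∏ i ∈ Finset.range d, (if k ≤ i then x^2 - ((s i)^2+1) else 1) := by
    rw [← Finset.prod_mul_distrib]
    have hterm : ∀ i ∈ Finset.range d,
        (if i < k then x else x + 1) * (if i < k then x else (x-1) - (s i)^2/(x+1)) =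
        (if i < k then x^2 else 1) * (if k ≤ i then x^2 - ((s i)^2+1) else 1) := by
      intro i _
      by_cases h : i < k
      · rw [if_pos h, if_pos h, if_pos h, if_neg (by omega), mul_one, sq]
      · rw [if_neg h, if_neg h, if_neg h, if_pos (by omega), one_mul]
        field_simp
        ring
    rw [Finset.prod_congr rfl hterm, Finset.prod_mul_distrib]
    congr 1
    rw [← Finset.prod_filter]
    have hf : (Finset.range d).filter (fun i => i < k) = Finset.range k := by
      ext a; simp only [Finset.mem_filter, Finset.mem_range]; omega
    rw [hf, Finset.prod_const, Finset.card_range, ← pow_mul]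
  rw [mul_mul_mul_comm, h3]
  ring

lemma my_det_block_aux {F : Type*} [Field F] {m n : ℕ} (a : Fin m → F) (b : Fin n → F)
    (U : Matrix (Fin m) (Fin n) F)
    (hU : ∀ (i : Fin m) (j : Fin n), (i:ℕ) ≠ (j:ℕ) → U i j = 0) (hb : ∀ j, b j ≠ 0) :
    (fromBlocks (diagonal a) U Uᵀ (diagonal b)).det =
      (∏ j, b j) * ∏ i : Fin m,
        (a i - (if h : (i:ℕ) < n then (U i ⟨i, h⟩)^2 / b ⟨i, h⟩ else 0)) := by
  have hinv : (diagonal b) * (diagonal fun j => (b j)⁻¹) = 1 := by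
    rw [diagonal_mul_diagonal,
      show (fun j => b j * (b j)⁻¹) = fun _ => (1:F) from funext fun j => mul_inv_cancel₀ (hb j),
      diagonal_one]
  haveI : Invertible (diagonal b) := invertibleOfRightInverse _ _ hinv
  rw [Matrix.det_fromBlocks₂₂]
  rw [invOf_eq_right_inv hinv]
  have hent : U * (diagonal fun j => (b j)⁻¹) * Uᵀ =
      diagonal (fun (i : Fin m) => if h : (i:ℕ) < n then (U i ⟨(i:ℕ),h⟩)^2 / b ⟨(i:ℕ),h⟩ else 0) := by
    ext i i'
    rw [Matrix.mul_apply]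
    simp only [Matrix.mul_diagonal, Matrix.transpose_apply]
    by_cases hii : i = i'
    · subst hii
      rw [diagonal_apply_eq]
      by_cases h : (i:ℕ) < n
      · rw [dif_pos h, Finset.sum_eq_single (⟨(i:ℕ), h⟩ : Fin n)]
        · rw [sq, div_eq_mul_inv]; ring
        · intro j _ hj
          have hij : (i:ℕ) ≠ (j:ℕ) := fun hc => hj (Fin.ext hc.symm)
          rw [hU i j hij]; ring
        · intro hmem; exact absurd (Finset.mem_univ _) hmem
      · rw [dif_neg h]
        apply Finset.sum_eq_zero
        intro j _
        have hij : (i:ℕ) ≠ (j:ℕ) := by have := j.isLt; omega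
        rw [hU i j hij]; ring
    · rw [diagonal_apply_ne _ hii]
      apply Finset.sum_eq_zero
      intro j _
      by_cases h1 : (i:ℕ) = (j:ℕ)
      · have h2 : (i':ℕ) ≠ (j:ℕ) := fun hc => hii (Fin.ext (by omega))
        rw [hU i' j h2]; ring
      · rw [hU i j h1]; ring
  rw [hent, diagonal_sub, det_diagonal, det_diagonal]

set_option maxHeartbeats 1600000 in
lemma my_model_charpoly (m n k : ℕ) (hk : k ≤ min m n) (Sig : Matrix (Fin m) (Fin n) ℝ)
    (hSigDiag : ∀ (i : Fin m) (j : Fin n), (i : ℕ) ≠ (j : ℕ) → Sig i j = 0) :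
    (fromBlocks (diagonal (fun (i : Fin m) => if (i:ℕ) < k then (0:ℝ) else 1))
      (Matrix.of fun (i : Fin m) (j : Fin n) => if k ≤ (i:ℕ) then Sig i j else 0)
      (Matrix.of fun (i : Fin m) (j : Fin n) => if k ≤ (i:ℕ) then Sig i j else 0)ᵀ
      (diagonal (fun (j : Fin n) => if (j:ℕ) < k then (0:ℝ) else -1))).charpoly
    = X ^ (2 * k) * (X - 1) ^ (m - min m n) * (X + 1) ^ (n - min m n) *
        ∏ i : Fin (min m n),
          (if k ≤ (i : ℕ) then
            X ^ 2 - C ((Sig (Fin.castLE (min_le_left m n) i)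
                (Fin.castLE (min_le_right m n) i)) ^ 2 + 1)
          else 1) := by
  set Sg : Matrix (Fin m) (Fin n) ℝ :=
    Matrix.of (fun (i : Fin m) (j : Fin n) => if k ≤ (i:ℕ) then Sig i j else 0) with hSgdef
  rw [Matrix.charpoly, charmatrix_fromBlocks, my_charmatrix_diagonal, my_charmatrix_diagonal]
  set F := FractionRing (Polynomial ℝ)
  set φ : Polynomial ℝ →+* F := algebraMap (Polynomial ℝ) F with hφdef
  have hinj : Function.Injective φ := IsFractionRing.injective (Polynomial ℝ) F
  apply hinj
  rw [RingHom.map_det, RingHom.mapMatrix_apply, Matrix.fromBlocks_map,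
    Matrix.diagonal_map (by simp), Matrix.diagonal_map (by simp)]
  set x : F := φ X with hxdef
  have hx1 : x + 1 ≠ 0 := by
    rw [hxdef, ← map_one φ, ← map_add]
    exact fun hc => (Polynomial.X_add_C_ne_zero (R := ℝ) 1) (by
      simpa using hinj (hc.trans (map_zero φ).symm))
  set s : ℕ → F := fun i => if h : i < m ∧ i < n then φ (C (Sig ⟨i, h.1⟩ ⟨i, h.2⟩)) else 0
    with hsdef
  have hblk2 : (-(Sg.map C)).map φ = -(Sg.map fun r => φ (C r)) := by
    ext i j; simp
  have hblk3 : (-(Sgᵀ.map C)).map φ = (-(Sg.map fun r => φ (C r)))ᵀ := by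
    ext i j; simp
  rw [hblk2, hblk3]
  rw [my_det_block_aux _ _ _ ?hU ?hb]
  case hU =>
    intro i j hij
    simp [hSgdef, hSigDiag i j hij]
  case hb =>
    intro j hc
    refine Polynomial.X_sub_C_ne_zero (if (j:ℕ) < k then (0:ℝ) else -1) (hinj ?_)
    rw [map_zero]
    simpa using hc
  -- now evaluate the two products
  have hb' : ∀ j : Fin n, ((fun p => φ p) ∘ fun (j : Fin n) => X - C (if (j:ℕ) < k then (0:ℝ) else -1)) j
      = (fun (t : ℕ) => if t < k then x else x + 1) (j : ℕ) := by
    intro j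
    by_cases h : (j:ℕ) < k
    · simp [h, hxdef]
    · simp only [Function.comp_apply, if_neg h, map_neg, _root_.map_one, map_sub, sub_neg_eq_add]
      simp [hxdef]
  have e1 : (∏ j : Fin n, φ (X - C (if (j:ℕ) < k then (0:ℝ) else -1)))
      = ∏ j ∈ Finset.range n, (if j < k then x else x + 1) := by
    rw [← Fin.prod_univ_eq_prod_range (fun t => if t < k then x else x + 1) n]
    refine Finset.prod_congr rfl fun j _ => ?_
    by_cases h : (j:ℕ) < k
    · simp [h, hxdef]
    · rw [if_neg h, show (X - C (-1 : ℝ)) = X + 1 by rw [map_neg, _root_.map_one, sub_neg_eq_add],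
        map_add, _root_.map_one, if_neg h, hxdef]
  have e2 : (∏ i : Fin m,
        (φ (X - C (if (i:ℕ) < k then (0:ℝ) else 1)) -
          if h : (i:ℕ) < n then
            (-Sg.map fun r => φ (C r)) i ⟨(i:ℕ), h⟩ ^ 2 /
              φ (X - C (if ((⟨(i:ℕ), h⟩ : Fin n) : ℕ) < k then (0:ℝ) else -1))
          else 0))
      = ∏ i ∈ Finset.range m, (if i < k then x else (x - 1) - (s i)^2/(x+1)) := by
    rw [← Fin.prod_univ_eq_prod_range (fun t => if t < k then x else (x - 1) - (s t)^2/(x+1)) m]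
    refine Finset.prod_congr rfl fun i _ => ?_
    have hone : φ (X - C (1:ℝ)) = x - 1 := by
      rw [map_sub, _root_.map_one, _root_.map_one, hxdef]
    by_cases hik : (i:ℕ) < k
    · rw [if_pos hik, if_pos hik]
      have hz : (if h : (i:ℕ) < n then
            (-Sg.map fun r => φ (C r)) i ⟨(i:ℕ), h⟩ ^ 2 /
              φ (X - C (if ((⟨(i:ℕ), h⟩ : Fin n) : ℕ) < k then (0:ℝ) else -1))
          else 0) = 0 := by
        by_cases h : (i:ℕ) < n
        · rw [dif_pos h]
          have hz0 : Sg i ⟨(i:ℕ), h⟩ = 0 := by simp [hSgdef, not_le.mpr hik]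
          simp [Matrix.map_apply, hz0]
        · rw [dif_neg h]
      rw [hz, sub_zero]
      simp [hxdef]
    · rw [if_neg hik, if_neg hik]
      by_cases h : (i:ℕ) < n
      · rw [dif_pos h]
        have h1 : Sg i ⟨(i:ℕ), h⟩ = Sig i ⟨(i:ℕ), h⟩ := by
          simp [hSgdef, not_lt.mp hik]
        have h2 : s (i:ℕ) = φ (C (Sig i ⟨(i:ℕ), h⟩)) := by
          simp only [hsdef]
          rw [dif_pos (⟨i.isLt, h⟩ : (i:ℕ) < m ∧ (i:ℕ) < n)]
        have h3 : φ (X - C (if ((⟨(i:ℕ), h⟩ : Fin n) : ℕ) < k then (0:ℝ) else -1)) = x + 1 := by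
          rw [show ((⟨(i:ℕ), h⟩ : Fin n) : ℕ) = (i:ℕ) from rfl, if_neg hik,
            show (X - C (-1 : ℝ)) = X + 1 by rw [map_neg, _root_.map_one, sub_neg_eq_add],
            map_add, _root_.map_one]
        rw [hone, h3]
        simp only [Matrix.neg_apply, Matrix.map_apply]
        rw [h1, neg_sq, ← h2]
      · rw [dif_neg h]
        have hs0 : s (i:ℕ) = 0 := by simp only [hsdef]; rw [dif_neg (by omega)]
        rw [hs0, hone]
        norm_num
  rw [e1, e2, my_prod_aux m n k hk x hx1 s ?hs]
  case hs =>
    intro i hi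
    simp only [hsdef]
    rw [dif_neg (by omega)]
  rw [_root_.map_mul, _root_.map_mul, _root_.map_mul, _root_.map_pow, _root_.map_pow,
    _root_.map_pow, _root_.map_sub, _root_.map_add, _root_.map_one, _root_.map_prod, ← hxdef]
  rw [← Fin.prod_univ_eq_prod_range (fun t => if k ≤ t then x^2 - ((s t)^2 + 1) else 1) (min m n)]
  refine congr_arg _ (Finset.prod_congr rfl fun i _ => ?_)
  by_cases h : k ≤ (i:ℕ)
  · rw [if_pos h, if_pos h, map_sub, map_pow, ← hxdef]
    congr 1
    have hC : C ((Sig (Fin.castLE (min_le_left m n) i) (Fin.castLE (min_le_right m n) i)) ^ 2 + 1)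
        = (C (Sig (Fin.castLE (min_le_left m n) i) (Fin.castLE (min_le_right m n) i))) ^ 2 + 1 := by
      rw [map_add, map_pow, _root_.map_one]
    rw [hC, map_add, map_pow, _root_.map_one]
    have h1 : ((i:ℕ) : ℕ) < m := lt_of_lt_of_le i.isLt (min_le_left m n)
    have h2 : ((i:ℕ) : ℕ) < n := lt_of_lt_of_le i.isLt (min_le_right m n)
    have hsv : s (i:ℕ) = φ (C (Sig (Fin.castLE (min_le_left m n) i) (Fin.castLE (min_le_right m n) i))) := by
      simp only [hsdef]
      rw [dif_pos (⟨h1, h2⟩ : (i:ℕ) < m ∧ (i:ℕ) < n)]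
      rfl
    rw [hsv]
  · rw [if_neg h, if_neg h, _root_.map_one]

lemma my_proj_diag {p q : ℕ} (h : q ≤ p) :
    (1 : Matrix (Fin p) (Fin p) ℝ) -
      ((1 : Matrix (Fin p) (Fin p) ℝ).submatrix id (Fin.castLE h)) *
        ((1 : Matrix (Fin p) (Fin p) ℝ).submatrix id (Fin.castLE h))ᵀ
      = diagonal (fun (i : Fin p) => if (i:ℕ) < q then (0:ℝ) else 1) := by
  ext i i'
  simp only [Matrix.sub_apply, Matrix.mul_apply, Matrix.submatrix_apply, Matrix.transpose_apply,
    id_eq, Matrix.one_apply]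
  by_cases hii : i = i'
  · subst hii
    rw [if_pos rfl, Matrix.diagonal_apply_eq]
    by_cases hik : (i:ℕ) < q
    · rw [if_pos hik]
      have hsum : (∑ j : Fin q, (if i = Fin.castLE h j then (1:ℝ) else 0) *
          (if i = Fin.castLE h j then (1:ℝ) else 0)) = 1 := by
        rw [Finset.sum_eq_single (⟨(i:ℕ), hik⟩ : Fin q)]
        · rw [if_pos (Fin.ext rfl : i = Fin.castLE h ⟨(i:ℕ), hik⟩)]
          norm_num
        · intro b _ hb
          have hne : i ≠ Fin.castLE h b := by
            intro hc
            apply hb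
            apply Fin.ext
            have := congrArg Fin.val hc
            simpa using this.symm
          rw [if_neg hne, zero_mul]
        · intro hmem; exact absurd (Finset.mem_univ _) hmem
      rw [hsum]
      norm_num
    · rw [if_neg hik]
      have hsum : (∑ j : Fin q, (if i = Fin.castLE h j then (1:ℝ) else 0) *
          (if i = Fin.castLE h j then (1:ℝ) else 0)) = 0 := by
        apply Finset.sum_eq_zero
        intro j _
        have hne : i ≠ Fin.castLE h j := by
          intro hc
          apply hik
          have := congrArg Fin.val hc
          simp at this
          omega
        rw [if_neg hne, zero_mul]
      rw [hsum, sub_zero]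
  · rw [if_neg hii, Matrix.diagonal_apply_ne _ hii]
    have hsum : (∑ j : Fin q, (if i = Fin.castLE h j then (1:ℝ) else 0) *
        (if i' = Fin.castLE h j then (1:ℝ) else 0)) = 0 := by
      apply Finset.sum_eq_zero
      intro j _
      by_cases h1 : i = Fin.castLE h j
      · have h2 : i' ≠ Fin.castLE h j := fun hc => hii (h1.trans hc.symm)
        rw [if_neg h2, mul_zero]
      · rw [if_neg h1, zero_mul]
    rw [hsum, sub_zero]

set_option maxHeartbeats 1600000 in
theorem charpoly_deflated_preconditioned (m n k : ℕ) (hk : k ≤ min m n)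
    (M : Matrix (Fin m) (Fin m) ℝ) (N : Matrix (Fin n) (Fin n) ℝ)
    (A : Matrix (Fin m) (Fin n) ℝ)
    (hM : M.PosDef) (hN : N.PosDef)
    (Ut : Matrix (Fin m) (Fin m) ℝ) (Vt : Matrix (Fin n) (Fin n) ℝ)
    (Sig : Matrix (Fin m) (Fin n) ℝ)
    (hUt : Utᵀ * M * Ut = 1) (hVt : Vtᵀ * N * Vt = 1)
    (hSigDiag : ∀ (i : Fin m) (j : Fin n), (i : ℕ) ≠ (j : ℕ) → Sig i j = 0)
    (hSigNonneg : ∀ (i : Fin m) (j : Fin n), (i : ℕ) = (j : ℕ) → 0 ≤ Sig i j)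
    (hA : A = M * Ut * Sig * Vtᵀ * N)
    (Uk : Matrix (Fin m) (Fin k) ℝ)
    (hUkdef : Uk = Ut.submatrix id (Fin.castLE (hk.trans (min_le_left m n))))
    (Vk : Matrix (Fin n) (Fin k) ℝ)
    (hVkdef : Vk = Vt.submatrix id (Fin.castLE (hk.trans (min_le_right m n))))
    (P : Matrix (Fin m) (Fin m) ℝ) (hP : P = 1 - M * Uk * Ukᵀ)
    (Q : Matrix (Fin n) (Fin n) ℝ) (hQ : Q = 1 - Vk * Vkᵀ * N)
    (K : Matrix (Fin m ⊕ Fin n) (Fin m ⊕ Fin n) ℝ)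
    (hK : K = Matrix.fromBlocks M A Aᵀ (-N))
    (Pcal : Matrix (Fin m ⊕ Fin n) (Fin m ⊕ Fin n) ℝ)
    (hPcal : Pcal = Matrix.fromBlocks P 0 0 Qᵀ)
    (Hinvhalf : Matrix (Fin m ⊕ Fin n) (Fin m ⊕ Fin n) ℝ)
    (hHinvhalf : Hinvhalf =
      Matrix.fromBlocks (CFC.sqrt M)⁻¹ 0 0 (CFC.sqrt N)⁻¹) :
    (Hinvhalf * Pcal * K * Hinvhalf).charpoly =
      X ^ (2 * k) * (X - 1) ^ (m - min m n) * (X + 1) ^ (n - min m n) *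
        ∏ i : Fin (min m n),
          (if k ≤ (i : ℕ) then
            X ^ 2 - C ((Sig (Fin.castLE (min_le_left m n) i)
                (Fin.castLE (min_le_right m n) i)) ^ 2 + 1)
          else 1) := by
  have hkm : k ≤ m := hk.trans (min_le_left m n)
  have hkn : k ≤ n := hk.trans (min_le_right m n)
  set S := CFC.sqrt M with hSdef
  set T := CFC.sqrt N with hTdef
  have hS2 : S * S = M := CFC.sqrt_mul_sqrt_self M hM.posSemidef.nonneg
  have hT2 : T * T = N := CFC.sqrt_mul_sqrt_self N hN.posSemidef.nonneg
  have hST : Sᵀ = S := by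
    rw [← Matrix.conjTranspose_eq_transpose_of_trivial]
    exact (Matrix.nonneg_iff_posSemidef.mp (CFC.sqrt_nonneg M)).1
  have hTT : Tᵀ = T := by
    rw [← Matrix.conjTranspose_eq_transpose_of_trivial]
    exact (Matrix.nonneg_iff_posSemidef.mp (CFC.sqrt_nonneg N)).1
  have hNT : Nᵀ = N := by
    rw [← Matrix.conjTranspose_eq_transpose_of_trivial]
    exact hN.1
  have hdetS : IsUnit S.det := by
    have h1 : S.det * S.det = M.det := by rw [← Matrix.det_mul, hS2]
    refine isUnit_iff_ne_zero.mpr fun hc => ?_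
    rw [hc, mul_zero] at h1
    exact hM.det_pos.ne' h1.symm
  have hdetT : IsUnit T.det := by
    have h1 : T.det * T.det = N.det := by rw [← Matrix.det_mul, hT2]
    refine isUnit_iff_ne_zero.mpr fun hc => ?_
    rw [hc, mul_zero] at h1
    exact hN.det_pos.ne' h1.symm
  haveI : Invertible S := S.invertibleOfIsUnitDet hdetS
  haveI : Invertible T := T.invertibleOfIsUnitDet hdetT
  have hSinvM : S⁻¹ * M = S := by
    rw [← hS2, ← Matrix.mul_assoc, Matrix.inv_mul_of_invertible, Matrix.one_mul]
  have hTinvN : T⁻¹ * N = T := by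
    rw [← hT2, ← Matrix.mul_assoc, Matrix.inv_mul_of_invertible, Matrix.one_mul]
  -- orthogonality facts
  have hUo1' : Utᵀ * S * (S * Ut) = 1 := by
    rw [← Matrix.mul_assoc, Matrix.mul_assoc Utᵀ S S, hS2, hUt]
  have hUoT : (S * Ut)ᵀ = Utᵀ * S := by rw [Matrix.transpose_mul, hST]
  have hUo1 : (S * Ut)ᵀ * (S * Ut) = 1 := by rw [hUoT]; exact hUo1'
  have hVo1' : Vtᵀ * T * (T * Vt) = 1 := by
    rw [← Matrix.mul_assoc, Matrix.mul_assoc Vtᵀ T T, hT2, hVt]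
  have hVoT : (T * Vt)ᵀ = Vtᵀ * T := by rw [Matrix.transpose_mul, hTT]
  have hVo1 : (T * Vt)ᵀ * (T * Vt) = 1 := by rw [hVoT]; exact hVo1'
  -- the J matrices
  set Jm : Matrix (Fin m) (Fin k) ℝ :=
    (1 : Matrix (Fin m) (Fin m) ℝ).submatrix id (Fin.castLE hkm) with hJmdef
  set Jn : Matrix (Fin n) (Fin k) ℝ :=
    (1 : Matrix (Fin n) (Fin n) ℝ).submatrix id (Fin.castLE hkn) with hJndef
  have hmulsub : ∀ (p q r : ℕ) (Z : Matrix (Fin p) (Fin q) ℝ) (Y : Matrix (Fin q) (Fin q) ℝ)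
      (g : Fin r → Fin q), Z * (Y.submatrix id g) = (Z * Y).submatrix id g := by
    intro p q r Z Y g
    ext i j
    simp [Matrix.mul_apply]
  have hKo : (S * Ut)ᵀ * (S * Uk) = Jm := by
    rw [hUoT, hUkdef, ← Matrix.mul_assoc, Matrix.mul_assoc Utᵀ S S, hS2, hmulsub, hUt, hJmdef]
  have hKoT : (S * Uk)ᵀ * (S * Ut) = Jmᵀ := by
    rw [← hKo, Matrix.transpose_mul ((S * Ut)ᵀ) (S * Uk), Matrix.transpose_transpose]
  have hLo : (T * Vt)ᵀ * (T * Vk) = Jn := by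
    rw [hVoT, hVkdef, ← Matrix.mul_assoc, Matrix.mul_assoc Vtᵀ T T, hT2, hmulsub, hVt, hJndef]
  have hLoT : (T * Vk)ᵀ * (T * Vt) = Jnᵀ := by
    rw [← hLo, Matrix.transpose_mul ((T * Vt)ᵀ) (T * Vk), Matrix.transpose_transpose]
  -- key simplifications of the blocks
  have hkeym : S⁻¹ * P = (1 - (S * Uk) * (S * Uk)ᵀ) * S⁻¹ := by
    rw [hP, Matrix.mul_sub, Matrix.mul_one, Matrix.sub_mul, Matrix.one_mul]
    congr 1
    rw [Matrix.transpose_mul, hST, Matrix.mul_assoc (S * Uk) (Ukᵀ * S) S⁻¹,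
      Matrix.mul_inv_cancel_right_of_invertible, ← Matrix.mul_assoc, ← Matrix.mul_assoc,
      hSinvM]
  have hkeyn : T⁻¹ * Qᵀ = (1 - (T * Vk) * (T * Vk)ᵀ) * T⁻¹ := by
    have hQT : Qᵀ = 1 - N * (Vk * Vkᵀ) := by
      rw [hQ, Matrix.transpose_sub, Matrix.transpose_one]
      congr 1
      rw [Matrix.transpose_mul, Matrix.transpose_mul, Matrix.transpose_transpose, hNT]
    rw [hQT, Matrix.mul_sub, Matrix.mul_one, Matrix.sub_mul, Matrix.one_mul]
    congr 1
    rw [Matrix.transpose_mul, hTT, Matrix.mul_assoc (T * Vk) (Vkᵀ * T) T⁻¹,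
      Matrix.mul_inv_cancel_right_of_invertible, ← Matrix.mul_assoc, hTinvN,
      ← Matrix.mul_assoc]
  have hA2 : A = S * ((S * Ut) * Sig * (T * Vt)ᵀ) * T := by
    rw [hA, hVoT, ← hS2, ← hT2]
    simp only [Matrix.mul_assoc]
  have hAT2 : Aᵀ = T * ((T * Vt) * Sigᵀ * (S * Ut)ᵀ) * S := by
    rw [hA2]
    simp only [Matrix.transpose_mul, Matrix.transpose_transpose, hST, hTT, Matrix.mul_assoc]
  have hX11 : S⁻¹ * P * M * S⁻¹ = 1 - (S * Uk) * (S * Uk)ᵀ := by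
    rw [hkeym, Matrix.mul_assoc _ S⁻¹ M, hSinvM, Matrix.mul_inv_cancel_right_of_invertible]
  have hX12 : S⁻¹ * P * A * T⁻¹ = (1 - (S * Uk) * (S * Uk)ᵀ) * ((S * Ut) * Sig * (T * Vt)ᵀ) := by
    rw [hkeym, hA2, Matrix.mul_assoc (1 - (S * Uk) * (S * Uk)ᵀ) S⁻¹,
      Matrix.mul_assoc S ((S * Ut) * Sig * (T * Vt)ᵀ) T,
      Matrix.inv_mul_cancel_left_of_invertible,
      Matrix.mul_assoc (1 - (S * Uk) * (S * Uk)ᵀ) _ T⁻¹,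
      Matrix.mul_inv_cancel_right_of_invertible]
  have hX21 : T⁻¹ * Qᵀ * Aᵀ * S⁻¹ = (1 - (T * Vk) * (T * Vk)ᵀ) * ((T * Vt) * Sigᵀ * (S * Ut)ᵀ) := by
    rw [hkeyn, hAT2, Matrix.mul_assoc (1 - (T * Vk) * (T * Vk)ᵀ) T⁻¹,
      Matrix.mul_assoc T ((T * Vt) * Sigᵀ * (S * Ut)ᵀ) S,
      Matrix.inv_mul_cancel_left_of_invertible,
      Matrix.mul_assoc (1 - (T * Vk) * (T * Vk)ᵀ) _ S⁻¹,
      Matrix.mul_inv_cancel_right_of_invertible]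
  have hX22 : T⁻¹ * Qᵀ * (-N) * T⁻¹ = -(1 - (T * Vk) * (T * Vk)ᵀ) := by
    rw [hkeyn, Matrix.mul_neg, Matrix.neg_mul,
      Matrix.mul_assoc (1 - (T * Vk) * (T * Vk)ᵀ) T⁻¹ N, hTinvN,
      Matrix.mul_inv_cancel_right_of_invertible]
  -- diagonal functions
  set e : Fin m → ℝ := fun i => if (i:ℕ) < k then 0 else 1 with hedef
  set en : Fin n → ℝ := fun j => if (j:ℕ) < k then 0 else 1 with hendef
  set f : Fin n → ℝ := fun j => if (j:ℕ) < k then 0 else -1 with hfdef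
  set Sg : Matrix (Fin m) (Fin n) ℝ :=
    Matrix.of (fun (i : Fin m) (j : Fin n) => if k ≤ (i:ℕ) then Sig i j else 0) with hSgdef
  have hJm : (1 : Matrix (Fin m) (Fin m) ℝ) - Jm * Jmᵀ = diagonal e := by
    rw [hJmdef, hedef]; exact my_proj_diag hkm
  have hJn : (1 : Matrix (Fin n) (Fin n) ℝ) - Jn * Jnᵀ = diagonal en := by
    rw [hJndef, hendef]; exact my_proj_diag hkn
  have hSg1 : diagonal e * Sig = Sg := by
    ext i j
    rw [Matrix.diagonal_mul]
    simp only [hedef, hSgdef, Matrix.of_apply]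
    by_cases h : (i:ℕ) < k
    · rw [if_pos h, if_neg (by omega), zero_mul]
    · rw [if_neg h, if_pos (by omega), one_mul]
  have hSg2 : diagonal en * Sigᵀ = Sgᵀ := by
    ext j i
    rw [Matrix.diagonal_mul, Matrix.transpose_apply, Matrix.transpose_apply]
    simp only [hendef, hSgdef, Matrix.of_apply]
    by_cases hj : (j:ℕ) < k
    · rw [if_pos hj, zero_mul]
      by_cases hi : k ≤ (i:ℕ)
      · rw [if_pos hi, hSigDiag i j (by omega)]
      · rw [if_neg hi]
    · rw [if_neg hj, one_mul]
      by_cases hi : k ≤ (i:ℕ)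
      · rw [if_pos hi]
      · rw [if_neg hi, hSigDiag i j (by omega)]
  -- conjugated blocks
  have hB11 : (S * Ut)ᵀ * (1 - (S * Uk) * (S * Uk)ᵀ) * (S * Ut) = diagonal e := by
    rw [Matrix.mul_sub, Matrix.mul_one, Matrix.sub_mul, hUo1,
      show (S * Ut)ᵀ * ((S * Uk) * (S * Uk)ᵀ) * (S * Ut)
          = ((S * Ut)ᵀ * (S * Uk)) * ((S * Uk)ᵀ * (S * Ut)) by simp only [Matrix.mul_assoc],
      hKo, hKoT]
    exact hJm
  have hB22' : (T * Vt)ᵀ * (1 - (T * Vk) * (T * Vk)ᵀ) * (T * Vt) = diagonal en := by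
    rw [Matrix.mul_sub, Matrix.mul_one, Matrix.sub_mul, hVo1,
      show (T * Vt)ᵀ * ((T * Vk) * (T * Vk)ᵀ) * (T * Vt)
          = ((T * Vt)ᵀ * (T * Vk)) * ((T * Vk)ᵀ * (T * Vt)) by simp only [Matrix.mul_assoc],
      hLo, hLoT]
    exact hJn
  have hB12 : (S * Ut)ᵀ * ((1 - (S * Uk) * (S * Uk)ᵀ) * ((S * Ut) * Sig * (T * Vt)ᵀ)) * (T * Vt)
      = Sg := by
    rw [show (S * Ut)ᵀ * ((1 - (S * Uk) * (S * Uk)ᵀ) * ((S * Ut) * Sig * (T * Vt)ᵀ)) * (T * Vt)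
        = ((S * Ut)ᵀ * (1 - (S * Uk) * (S * Uk)ᵀ) * (S * Ut)) * Sig * ((T * Vt)ᵀ * (T * Vt)) by
      simp only [Matrix.mul_assoc]]
    rw [hB11, hVo1, Matrix.mul_one, hSg1]
  have hB21 : (T * Vt)ᵀ * ((1 - (T * Vk) * (T * Vk)ᵀ) * ((T * Vt) * Sigᵀ * (S * Ut)ᵀ)) * (S * Ut)
      = Sgᵀ := by
    rw [show (T * Vt)ᵀ * ((1 - (T * Vk) * (T * Vk)ᵀ) * ((T * Vt) * Sigᵀ * (S * Ut)ᵀ)) * (S * Ut)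
        = ((T * Vt)ᵀ * (1 - (T * Vk) * (T * Vk)ᵀ) * (T * Vt)) * Sigᵀ * ((S * Ut)ᵀ * (S * Ut)) by
      simp only [Matrix.mul_assoc]]
    rw [hB22', hUo1, Matrix.mul_one, hSg2]
  have hB22 : (T * Vt)ᵀ * (-(1 - (T * Vk) * (T * Vk)ᵀ)) * (T * Vt) = diagonal f := by
    rw [Matrix.mul_neg, Matrix.neg_mul, hB22']
    ext a b
    by_cases hab : a = b
    · subst hab
      rw [Matrix.neg_apply, Matrix.diagonal_apply_eq, Matrix.diagonal_apply_eq]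
      simp only [hendef, hfdef]
      split_ifs <;> norm_num
    · rw [Matrix.neg_apply, Matrix.diagonal_apply_ne _ hab, Matrix.diagonal_apply_ne _ hab,
        neg_zero]
  -- the conjugating matrix
  set O : Matrix (Fin m ⊕ Fin n) (Fin m ⊕ Fin n) ℝ :=
    fromBlocks (S * Ut)ᵀ 0 0 (T * Vt)ᵀ with hOdef
  have hOT : Oᵀ = fromBlocks (S * Ut) 0 0 (T * Vt) := by
    rw [hOdef, Matrix.fromBlocks_transpose, Matrix.transpose_transpose,
      Matrix.transpose_transpose, Matrix.transpose_zero, Matrix.transpose_zero]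
  have hOO : O * Oᵀ = 1 := by
    rw [hOdef, hOT, Matrix.fromBlocks_multiply]
    simp only [Matrix.mul_zero, Matrix.zero_mul, add_zero, zero_add, hUo1, hVo1]
    exact Matrix.fromBlocks_one
  have hW : Hinvhalf * Pcal * K * Hinvhalf =
      fromBlocks (S⁻¹ * P * M * S⁻¹) (S⁻¹ * P * A * T⁻¹)
        (T⁻¹ * Qᵀ * Aᵀ * S⁻¹) (T⁻¹ * Qᵀ * (-N) * T⁻¹) := by
    rw [hHinvhalf, hPcal, hK, Matrix.fromBlocks_multiply, Matrix.fromBlocks_multiply,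
      Matrix.fromBlocks_multiply]
    simp only [Matrix.mul_zero, Matrix.zero_mul, add_zero, zero_add]
  have hOWOT : O * (Hinvhalf * Pcal * K * Hinvhalf) * Oᵀ
      = fromBlocks (diagonal e) Sg Sgᵀ (diagonal f) := by
    rw [hW, hOdef, hOT, Matrix.fromBlocks_multiply, Matrix.fromBlocks_multiply]
    simp only [Matrix.mul_zero, Matrix.zero_mul, add_zero, zero_add]
    rw [hX11, hX12, hX21, hX22, hB11, hB12, hB21, hB22]
  have hWform : Hinvhalf * Pcal * K * Hinvhalf
      = Oᵀ * (fromBlocks (diagonal e) Sg Sgᵀ (diagonal f)) * O := by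
    have h2 : Oᵀ * O = 1 := mul_eq_one_comm.mp hOO
    calc Hinvhalf * Pcal * K * Hinvhalf
        = (Oᵀ * O) * (Hinvhalf * Pcal * K * Hinvhalf) * (Oᵀ * O) := by
          rw [h2, Matrix.one_mul, Matrix.mul_one]
      _ = Oᵀ * (O * (Hinvhalf * Pcal * K * Hinvhalf) * Oᵀ) * O := by
          simp only [Matrix.mul_assoc]
      _ = Oᵀ * (fromBlocks (diagonal e) Sg Sgᵀ (diagonal f)) * O := by rw [hOWOT]
  rw [hWform, my_charpoly_conj O _ hOO]
  have hmodel := my_model_charpoly m n k hk Sig hSigDiag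
  simp only [hedef, hfdef, hSgdef]
  exact hmodel
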